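/- Let M1, M2, M3, M4 ∈ SL(2,C). With the trace notation p_i = tr M_i, p_{ij} = tr(M_iM_j), p_{ijk}=tr(M_iM_jM_k), p∞=tr(M4M3M2M1), the following identity holds: −p2p4 + p_{21}p_{41} + 2p_{42} − p1p_{421} + p_{32}p_{43} − p_{321}p_{431} − p3p_{432} + p_{31}p∞ = 0. -/

import Mathlib

abbrev SL2 := Matrix.SpecialLinearGroup (Fin 2) ℂ

noncomputable def tr (A : SL2) : ℂ := (A : Matrix (Fin 2) (Fin 2) ℂ).trace

set_option maxHeartbeats 1600000 in
theorem trace_identity_f12 (M1 M2 M3 M4 : SL2) :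
    -(tr M2 * tr M4) + tr (M2 * M1) * tr (M4 * M1) + 2 * tr (M4 * M2)
      - tr M1 * tr (M4 * M2 * M1) + tr (M3 * M2) * tr (M4 * M3)
      - tr (M3 * M2 * M1) * tr (M4 * M3 * M1) - tr M3 * tr (M4 * M3 * M2)
      + tr (M3 * M1) * tr (M4 * M3 * M2 * M1) = 0 := by
  simp only [tr, Matrix.SpecialLinearGroup.coe_mul]
  obtain ⟨A1, h1⟩ := M1; obtain ⟨A2, h2⟩ := M2
  obtain ⟨A3, h3⟩ := M3; obtain ⟨A4, h4⟩ := M4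
  rw [Matrix.det_fin_two] at h1 h2 h3 h4
  set a1 := A1 0 0 with ha1; set b1 := A1 0 1 with hb1
  set c1 := A1 1 0 with hc1; set d1 := A1 1 1 with hd1
  set a2 := A2 0 0 with ha2; set b2 := A2 0 1 with hb2
  set c2 := A2 1 0 with hc2; set d2 := A2 1 1 with hd2
  set a3 := A3 0 0 with ha3; set b3 := A3 0 1 with hb3
  set c3 := A3 1 0 with hc3; set d3 := A3 1 1 with hd3
  set a4 := A4 0 0 with ha4; set b4 := A4 0 1 with hb4
  set c4 := A4 1 0 with hc4; set d4 := A4 1 1 with hd4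
  simp only [tr, Matrix.SpecialLinearGroup.coe_mul, Matrix.SpecialLinearGroup.coe_mk, Submonoid.mk_mul_mk,
    Matrix.trace_fin_two, Matrix.mul_apply, Fin.sum_univ_two,
    ← ha1, ← hb1, ← hc1, ← hd1, ← ha2, ← hb2, ← hc2, ← hd2,
    ← ha3, ← hb3, ← hc3, ← hd3, ← ha4, ← hb4, ← hc4, ← hd4]
  linear_combination (-d2*d4 + d2*a4 - 1*d2*c3*d3*b4 + d2*a3*d3*d4 - 1*d2*a3*d3*a4 + d2*a3*b3*c4 - 1*c2*b4 + c2*d3*d3*b4 - 1*c2*b3*d3*d4 + c2*b3*d3*a4 - 1*c2*b3*b3*c4 - 1*b2*c4 - 1*b2*c3*c3*b4 + b2*a3*c3*d4 - 1*b2*a3*c3*a4 + b2*a3*a3*c4 + a2*d4 - 1*a2*a4 + a2*c3*d3*b4 - 1*a2*a3*d3*d4 + a2*a3*d3*a4 - 1*a2*a3*b3*c4) * h1 + (-c2*b4 - 1*b2*c4 + d1*d1*b2*c4 - 1*c1*d1*b2*d4 + c1*d1*b2*a4 - 1*c1*c1*b2*b4 - 1*b1*d1*d2*c4 + b1*d1*a2*c4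 + b1*c1*d2*d4 - 1*b1*c1*d2*a4 - 1*b1*c1*a2*d4 + b1*c1*a2*a4 - 1*b1*b1*c2*c4 + a1*c1*d2*b4 - 1*a1*c1*a2*b4 + a1*b1*c2*d4 - 1*a1*b1*c2*a4 + a1*a1*c2*b4) * h3
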